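/- arXiv:2505.23665 — 2 statements merged into one kernel-verified Lean document; each statement's English description precedes it below -/
import Mathlib

section
/- Let n ∈ ℕ and let X be a Peano continuum. Then the set of π_n-wild points of X is closed in X; in particular, the π_n-wild set w_n(X), with its subspace topology, is a compact metrizable space. -/
open Filter Topology

/-- The unit `n`-sphere in `ℝ^(n+1)`. -/
abbrev Sph (n : ℕ) : Type :=
  Metric.sphere (0 : EuclideanSpace ℝ (Fin (n + 1))) 1

/-- The basepoint `s₀ = (1,0,…,0)` of the unit `n`-sphere. -/
noncomputable def spherePt (n : ℕ) : Sph n :=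
  ⟨EuclideanSpace.single 0 1, by
    simp [mem_sphere_zero_iff_norm, EuclideanSpace.norm_single]⟩

/-- A continuous map `S^n → X` is essential if it is not homotopic to a constant map. -/
def Essential {n : ℕ} {X : Type*} [TopologicalSpace X] (f : C(Sph n, X)) : Prop :=
  ∀ x : X, ¬ f.Homotopic (ContinuousMap.const (Sph n) x)

/-- `x` is a `π_n`-wild point of `X` if there is a sequence of essential maps
`S^n → X` based at `x` converging to the constant map at `x` in the compact-open
topology. -/
def IsWildPoint (n : ℕ) {X : Type*} [TopologicalSpace X] (x : X) : Prop :=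
  ∃ f : ℕ → C(Sph n, X),
    (∀ k, f k (spherePt n) = x) ∧
    (∀ k, Essential (f k)) ∧
    Tendsto f atTop (𝓝 (ContinuousMap.const (Sph n) x))

/-- The `π_n`-wild set of `X`. -/
def wildSet (n : ℕ) (X : Type*) [TopologicalSpace X] : Set X :=
  {x | IsWildPoint n x}

/-- A continuous map is `π_n`-injective if precomposition reflects inessentiality. -/
def PiNInjective (n : ℕ) {X Y : Type*} [TopologicalSpace X] [TopologicalSpace Y]
    (f : C(X, Y)) : Prop :=
  ∀ g : C(Sph n, X),
    (∃ y : Y, (f.comp g).Homotopic (ContinuousMap.const (Sph n) y)) →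
    ∃ x : X, g.Homotopic (ContinuousMap.const (Sph n) x)

/-- `X` is `π_n`-rigid at `x`. -/
def IsRigidAt (n : ℕ) {X : Type*} [TopologicalSpace X] (x : X) : Prop :=
  ∃ f : ℕ → C(Sph n, X),
    (∀ k, f k (spherePt n) = x) ∧
    (∀ k, Essential (f k)) ∧
    Tendsto f atTop (𝓝 (ContinuousMap.const (Sph n) x)) ∧
    ∀ β : C(unitInterval, X), β 0 = x →
      ∀ H : ℕ → C(Sph n × unitInterval, X),
        (∀ k s, H k (s, 0) = f k s) →
        (∀ k t, H k (spherePt n, t) = β t) →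
        Tendsto H atTop (𝓝 (β.comp (ContinuousMap.snd (α := Sph n)))) →
        β 1 = x


section Chains
variable {X : Type*} [MetricSpace X]

/-- Uniform local connectedness from compactness + local connectedness. -/
lemma my_ulc [CompactSpace X] [LocallyConnectedSpace X] {ε : ℝ} (hε : 0 < ε) :
    ∃ δ > 0, ∀ x y : X, dist x y < δ →
      ∃ C : Set X, IsPreconnected C ∧ x ∈ C ∧ y ∈ C ∧ ∀ z ∈ C, dist z x < ε := by
  have h : ∀ z : X, ∃ V ⊆ Metric.ball z (ε/2), IsOpen V ∧ z ∈ V ∧ IsConnected V := fun z =>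
    locallyConnectedSpace_iff_subsets_isOpen_isConnected.mp ‹_› z (Metric.ball z (ε/2))
      (Metric.ball_mem_nhds z (by linarith))
  choose V hVsub hVopen hVmem hVconn using h
  obtain ⟨δ, hδ, hcov⟩ := lebesgue_number_lemma_of_metric (isCompact_univ (X := X)) hVopen
    (fun z _ => Set.mem_iUnion.mpr ⟨z, hVmem z⟩)
  refine ⟨δ, hδ, fun x y hxy => ?_⟩
  obtain ⟨z, hz⟩ := hcov x (Set.mem_univ x)
  have hxV : x ∈ V z := hz (Metric.mem_ball_self hδ)
  refine ⟨V z, (hVconn z).isPreconnected, hxV,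
    hz (by simpa [Metric.mem_ball, dist_comm] using hxy), fun w hw => ?_⟩
  have h1 := hVsub z hw
  have h2 := hVsub z hxV
  rw [Metric.mem_ball] at h1 h2
  have := dist_triangle w z x
  rw [dist_comm z x] at this
  linarith

/-- extend a chain by one point -/
lemma chain_snoc {C : Set X} {x w z : X} {ε : ℝ} {m : ℕ} {p : ℕ → X}
    (h0 : p 0 = x) (hm : p m = w) (hgap : ∀ i < m, dist (p i) (p (i+1)) < ε)
    (hmem : ∀ i ≤ m, p i ∈ C) (hz : z ∈ C) (hwz : dist w z < ε) :
    ∃ q : ℕ → X, q 0 = x ∧ q (m+1) = z ∧ (∀ i < m+1, dist (q i) (q (i+1)) < ε) ∧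
      ∀ i ≤ m+1, q i ∈ C := by
  refine ⟨fun i => if i ≤ m then p i else z, by simp [h0], by simp, fun i hi => ?_, fun i hi => ?_⟩
  · rcases lt_or_eq_of_le (Nat.lt_succ_iff.mp hi) with h | h
    · simpa [Nat.le_of_lt h, h, Nat.succ_le_of_lt h] using hgap i h
    · subst h; simpa [hm] using hwz
  · by_cases h : i ≤ m
    · simpa [h] using hmem i h
    · simpa [h] using hz

/-- ε-chains in preconnected sets. -/
lemma chain_of_preconnected {C : Set X} (hC : IsPreconnected C)
    {x y : X} (hx : x ∈ C) (hy : y ∈ C) {ε : ℝ} (hε : 0 < ε) :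
    ∃ (m : ℕ) (p : ℕ → X), p 0 = x ∧ p m = y ∧ (∀ i < m, dist (p i) (p (i+1)) < ε) ∧
      ∀ i ≤ m, p i ∈ C := by
  set S : Set X := {w | w ∈ C ∧ ∃ (m : ℕ) (p : ℕ → X), p 0 = x ∧ p m = w ∧
    (∀ i < m, dist (p i) (p (i+1)) < ε) ∧ ∀ i ≤ m, p i ∈ C} with hS
  have hxS : x ∈ S := ⟨hx, 0, fun _ => x, rfl, rfl, fun i hi => absurd hi (Nat.not_lt_zero i),
    fun _ _ => hx⟩
  by_cases hyS : y ∈ S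
  · exact hyS.2
  exfalso
  set U := ⋃ w ∈ S, Metric.ball w ε with hU
  set Vv := ⋃ w ∈ C \ S, Metric.ball w ε with hVv
  have hUo : IsOpen U := isOpen_biUnion fun _ _ => Metric.isOpen_ball
  have hVo : IsOpen Vv := isOpen_biUnion fun _ _ => Metric.isOpen_ball
  have hsub : C ⊆ U ∪ Vv := by
    intro w hw
    by_cases hwS : w ∈ S
    · exact Or.inl (Set.mem_biUnion hwS (Metric.mem_ball_self hε))
    · exact Or.inr (Set.mem_biUnion ⟨hw, hwS⟩ (Metric.mem_ball_self hε))
  obtain ⟨z, hzC, hzU, hzV⟩ := hC U Vv hUo hVo hsub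
    ⟨x, hx, Set.mem_biUnion hxS (Metric.mem_ball_self hε)⟩
    ⟨y, hy, Set.mem_biUnion ⟨hy, hyS⟩ (Metric.mem_ball_self hε)⟩
  obtain ⟨w, hwS, hzw⟩ := Set.mem_iUnion₂.mp hzU
  obtain ⟨w', hw'CS, hzw'⟩ := Set.mem_iUnion₂.mp hzV
  rw [Metric.mem_ball] at hzw hzw'
  obtain ⟨hwC, m, p, hp0, hpm, hgap, hmem⟩ := hwS
  obtain ⟨q, hq0, hqm, hqgap, hqmem⟩ := chain_snoc hp0 hpm hgap hmem hzC (by rwa [dist_comm])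
  obtain ⟨q', hq'0, hq'm, hq'gap, hq'mem⟩ := chain_snoc hq0 hqm hqgap hqmem hw'CS.1
    hzw'
  exact hw'CS.2 ⟨hw'CS.1, m+1+1, q', hq'0, hq'm, hq'gap, hq'mem⟩
end Chains

section Refine
variable {X : Type*} [MetricSpace X]

lemma refine_chain {εi δi δi' : ℝ} (hδi' : 0 < δi')
    (hulc : ∀ x y : X, dist x y < δi →
      ∃ C : Set X, IsPreconnected C ∧ x ∈ C ∧ y ∈ C ∧ ∀ z ∈ C, dist z x < εi)
    (hcp : ∀ (C : Set X), IsPreconnected C → ∀ x ∈ C, ∀ y ∈ C,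
      ∃ (m : ℕ) (p : ℕ → X), p 0 = x ∧ p m = y ∧ (∀ i < m, dist (p i) (p (i+1)) < δi') ∧
        ∀ i ≤ m, p i ∈ C)
    {L : ℕ} {P : ℕ → X} (hgap : ∀ j < L, dist (P j) (P (j+1)) < δi) :
    ∃ (M : ℕ) (P' : ℕ → X), 1 ≤ M ∧ (∀ j ≤ L, P' (j*M) = P j) ∧
      (∀ k < L*M, dist (P' k) (P' (k+1)) < δi') ∧
      (∀ j < L, ∀ k, j*M ≤ k → k ≤ (j+1)*M → dist (P' k) (P j) < εi) := by
  classical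
  have hC : ∀ j : ℕ, j < L → ∃ C : Set X, IsPreconnected C ∧ P j ∈ C ∧ P (j+1) ∈ C ∧
      ∀ z ∈ C, dist z (P j) < εi := fun j hj => hulc _ _ (hgap j hj)
  choose C hCconn hCl hCr hCball using hC
  have hq : ∀ j (hj : j < L), ∃ (m : ℕ) (p : ℕ → X), p 0 = P j ∧ p m = P (j+1) ∧
      (∀ i < m, dist (p i) (p (i+1)) < δi') ∧ ∀ i ≤ m, p i ∈ C j hj :=
    fun j hj => hcp _ (hCconn j hj) _ (hCl j hj) _ (hCr j hj)
  choose m q hq0 hqm hqgap hqmem using hq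
  set M : ℕ := (Finset.sup (Finset.range L) (fun j => if h : j < L then m j h else 0)) + 1
    with hMdef
  have hM1 : 1 ≤ M := Nat.le_add_left 1 _
  have hMpos : 0 < M := hM1
  have hmle : ∀ j (hj : j < L), m j hj ≤ M - 1 := by
    intro j hj
    have h := Finset.le_sup (f := fun j => if h : j < L then m j h else 0)
      (Finset.mem_range.mpr hj)
    simp only [dif_pos hj] at h
    omega
  set Pnew : ℕ → X :=
    (fun k => if h : k / M < L then q (k/M) h (min (k % M) (m (k/M) h)) else P L) with hPdef
  have hdm : ∀ (j r : ℕ), r < M → (M*j + r)/M = j ∧ (M*j + r)%M = r := fun j r hr =>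
    ⟨by rw [Nat.mul_add_div hMpos, Nat.div_eq_of_lt hr, Nat.add_zero],
     by rw [Nat.mul_add_mod, Nat.mod_eq_of_lt hr]⟩
  have hPval : ∀ (j r : ℕ) (hj : j < L), r < M →
      Pnew (M*j + r) = q j hj (min r (m j hj)) := by
    intro j r hj hr
    rw [hPdef]
    simp only [(hdm j r hr).1, (hdm j r hr).2, dif_pos hj]
  have hPnode : ∀ j, j ≤ L → Pnew (j*M) = P j := by
    intro j hjL
    rcases lt_or_eq_of_le hjL with h | h
    · rw [Nat.mul_comm, ← Nat.add_zero (M*j), hPval j 0 h hMpos]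
      simpa using hq0 j h
    · subst h
      rw [hPdef]
      have hdiv : j * M / M = j := Nat.mul_div_cancel j hMpos
      simp [hdiv]
  refine ⟨M, Pnew, hM1, hPnode, ?_, ?_⟩
  · intro k hk
    have hj : k / M < L := Nat.div_lt_of_lt_mul (by rwa [Nat.mul_comm] at hk)
    have hrM : k % M < M := Nat.mod_lt _ hMpos
    have hkd := Nat.div_add_mod k M
    have hkey : Pnew k = q (k/M) hj (min (k % M) (m (k/M) hj)) := by
      conv_lhs => rw [← hkd]
      exact hPval _ _ hj hrM
    by_cases hr1 : k % M + 1 < M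
    · have e1 : k + 1 = M * (k/M) + (k % M + 1) := by omega
      have hkey1 : Pnew (k+1) = q (k/M) hj (min (k % M + 1) (m (k/M) hj)) := by
        rw [e1]; exact hPval _ _ hj hr1
      rw [hkey, hkey1]
      by_cases hrm : k % M < m (k/M) hj
      · rw [min_eq_left (le_of_lt hrm), min_eq_left (Nat.succ_le_of_lt hrm)]
        exact hqgap _ hj _ hrm
      · push_neg at hrm
        rw [min_eq_right hrm, min_eq_right (le_trans hrm (Nat.le_succ _))]
        simpa using hδi'
    · have e1 : k + 1 = (k/M + 1) * M := by
        have : (k/M + 1) * M = k/M * M + M := Nat.succ_mul _ _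
        have h2 : k/M * M = M * (k/M) := Nat.mul_comm _ _
        omega
      have hkey1 : Pnew (k+1) = P (k/M + 1) := by
        rw [e1]; exact hPnode _ hj
      have hmm : min (k % M) (m (k/M) hj) = m (k/M) hj := by
        have := hmle (k/M) hj; omega
      rw [hkey, hkey1, hmm, hqm _ hj]
      simpa using hδi'
  · intro j hj k hk1 hk2
    rcases lt_or_eq_of_le hk2 with hlt | heq
    · have hsm : (j+1)*M = j*M + M := Nat.succ_mul _ _
      have hcm : j*M = M*j := Nat.mul_comm _ _
      have hr : k - j*M < M := by omega
      have e : k = M*j + (k - j*M) := by omega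
      rw [e, hPval j _ hj hr]
      exact hCball j hj _ (hqmem j hj _ (min_le_right _ _))
    · rw [heq, hPnode _ hj]
      exact hCball j hj _ (hCr j hj)
end Refine

section Path
variable {X : Type*} [MetricSpace X]

lemma exists_small_path [CompactSpace X] [LocallyConnectedSpace X] {ε : ℝ} (hε : 0 < ε) :
    ∃ δ > 0, ∀ x y : X, dist x y < δ →
      ∃ γ : C(unitInterval, X), γ 0 = x ∧ γ 1 = y ∧ ∀ t, dist (γ t) x < ε := by
  classical
  letI : CompleteSpace X := complete_of_compact
  set εs : ℕ → ℝ := fun i => ε / 2^(i+3) with hεsdef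
  have hεs : ∀ i, 0 < εs i := fun i => by positivity
  have hu := fun i => my_ulc (X := X) (hεs i)
  choose δs hδspos hulc using hu
  set δ' : ℕ → ℝ := fun i => min (δs i) (εs i) with hδ'def
  have hδ'pos : ∀ i, 0 < δ' i := fun i => lt_min (hδspos i) (hεs i)
  have hδ'le : ∀ i, δ' i ≤ εs i := fun i => min_le_right _ _
  have hulc' : ∀ i (a b : X), dist a b < δ' i →
      ∃ C : Set X, IsPreconnected C ∧ a ∈ C ∧ b ∈ C ∧ ∀ z ∈ C, dist z a < εs i :=
    fun i a b h => hulc i a b (lt_of_lt_of_le h (min_le_left _ _))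
  have key : ∀ i (L : ℕ) (P : ℕ → X), (∀ j < L, dist (P j) (P (j+1)) < δ' i) →
      ∃ (M : ℕ) (P' : ℕ → X), 1 ≤ M ∧ (∀ j ≤ L, P' (j*M) = P j) ∧
        (∀ k < L*M, dist (P' k) (P' (k+1)) < δ' (i+1)) ∧
        (∀ j < L, ∀ k, j*M ≤ k → k ≤ (j+1)*M → dist (P' k) (P j) < εs i) :=
    fun i L P h => refine_chain (hδ'pos (i+1)) (hulc' i)
      (fun C hC a ha b hb => chain_of_preconnected hC ha hb (hδ'pos (i+1))) h
  have hto0 : Filter.Tendsto (fun i : ℕ => ε / 2^(i+2)) Filter.atTop (nhds 0) := by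
    apply Filter.Tendsto.div_atTop tendsto_const_nhds
    exact (tendsto_pow_atTop_atTop_of_one_lt one_lt_two).comp (Filter.tendsto_add_atTop_nat 2)
  have hquarter : ∀ i : ℕ, (0:ℝ) < ε / 2^(i+2) := fun i => by positivity
  refine ⟨δ' 0, hδ'pos 0, fun x y hxy => ?_⟩
  -- build the sequence of chains
  have main : ∃ (L : ℕ → ℕ) (P : ℕ → ℕ → X),
      (∀ i, (1 ≤ L i ∧ P i 0 = x ∧ P i (L i) = y) ∧
        ∀ j < L i, dist (P i j) (P i (j+1)) < δ' i) ∧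
      (∀ k, dist (P 0 k) x < δ' 0) ∧
      (∀ i, ∃ M, 1 ≤ M ∧ L (i+1) = L i * M ∧ (∀ j ≤ L i, P (i+1) (j*M) = P i j) ∧
        ∀ j < L i, ∀ k, j*M ≤ k → k ≤ (j+1)*M → dist (P (i+1) k) (P i j) < εs i) := by
    let T : ℕ → Type _ := fun i => Σ' (L : ℕ) (P : ℕ → X),
      (1 ≤ L ∧ P 0 = x ∧ P L = y) ∧ ∀ j < L, dist (P j) (P (j+1)) < δ' i
    let base : T 0 := ⟨1, fun k => if k = 0 then x else y,
      ⟨le_refl 1, by simp, by simp⟩, by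
        intro j hj
        interval_cases j
        simpa using hxy⟩
    have step : ∀ i, (d : T i) → {d' : T (i+1) //
        ∃ M, 1 ≤ M ∧ d'.1 = d.1 * M ∧ (∀ j ≤ d.1, d'.2.1 (j*M) = d.2.1 j) ∧
          ∀ j < d.1, ∀ k, j*M ≤ k → k ≤ (j+1)*M → dist (d'.2.1 k) (d.2.1 j) < εs i} := by
      intro i d
      obtain ⟨L, P, ⟨hL1, hP0, hPL⟩, hgaps⟩ := d
      have e := key i L P hgaps
      refine ⟨⟨L * e.choose, e.choose_spec.choose,
        ⟨Nat.mul_le_mul hL1 e.choose_spec.choose_spec.1, ?_, ?_⟩,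
        e.choose_spec.choose_spec.2.2.1⟩,
        e.choose, e.choose_spec.choose_spec.1, rfl, e.choose_spec.choose_spec.2.1,
        e.choose_spec.choose_spec.2.2.2⟩
      · have h := e.choose_spec.choose_spec.2.1 0 (Nat.zero_le L)
        rwa [Nat.zero_mul, hP0] at h
      · have h := e.choose_spec.choose_spec.2.1 L le_rfl
        rwa [hPL] at h
    let W : ∀ i, T i := fun i => Nat.rec base (fun i d => (step i d).1) i
    have hWs : ∀ i, W (i+1) = (step i (W i)).1 := fun i => rfl
    refine ⟨fun i => (W i).1, fun i => (W i).2.1, fun i => (W i).2.2, ?_, ?_⟩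
    · -- level-0 bound
      intro k
      have hW0 : (W 0).2.1 = fun k => if k = 0 then x else y := rfl
      show dist ((W 0).2.1 k) x < δ' 0
      rw [hW0]
      by_cases hk : k = 0
      · simp [hk, hδ'pos 0]
      · simpa [hk, dist_comm] using hxy
    · intro i
      have h := (step i (W i)).2
      rw [← hWs i] at h
      exact h
  obtain ⟨L, P, hInv, h0, hRel⟩ := main
  have hL1 : ∀ i, 1 ≤ L i := fun i => (hInv i).1.1
  have hLpos : ∀ i, (0:ℝ) < L i := fun i => by exact_mod_cast (hL1 i)
  have hP0 : ∀ i, P i 0 = x := fun i => (hInv i).1.2.1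
  have hPL : ∀ i, P i (L i) = y := fun i => (hInv i).1.2.2
  have hgaps : ∀ i, ∀ j < L i, dist (P i j) (P i (j+1)) < δ' i := fun i => (hInv i).2
  set ki : ℕ → unitInterval → ℕ := fun i t => min (L i) (Nat.floor ((t:ℝ) * L i)) with hkidef
  set gi : ℕ → unitInterval → X := fun i t => P i (ki i t) with hgidef
  have hki_le : ∀ i t, ki i t ≤ L i := fun i t => min_le_left _ _
  have hE1 : ∀ i (t : unitInterval), dist (gi (i+1) t) (gi i t) ≤ εs i := by
    intro i t
    obtain ⟨M, hM1, hLs, hnode, hclose⟩ := hRel i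
    have hMpos : (0:ℝ) < M := by exact_mod_cast hM1
    have ht0 : (0:ℝ) ≤ (t:ℝ) := t.2.1
    have ht1 : (t:ℝ) ≤ 1 := t.2.2
    have hLM : (L (i+1) : ℝ) = (L i : ℝ) * M := by rw [hLs]; push_cast; ring
    by_cases hcase : L i ≤ Nat.floor ((t:ℝ) * L i)
    · have h1 : (L i : ℝ) ≤ (t:ℝ) * L i := by
        calc (L i : ℝ) ≤ (Nat.floor ((t:ℝ) * L i) : ℝ) := by exact_mod_cast hcase
        _ ≤ (t:ℝ) * L i := Nat.floor_le (by positivity)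
      have h2 : (t:ℝ) * L i ≤ L i := by nlinarith [hLpos i]
      have htL : (t:ℝ) * L i = L i := le_antisymm h2 h1
      have hki : ki i t = L i := by simp [hkidef, htL]
      have htL1 : (t:ℝ) * L (i+1) = L (i+1) := by
        rw [hLM, ← mul_assoc, htL]
      have hki1 : ki (i+1) t = L (i+1) := by simp [hkidef, htL1]
      rw [hgidef]
      simp only [hki, hki1]
      rw [hPL, hPL]
      simp [le_of_lt (hεs i)]
    · push_neg at hcase
      set j := Nat.floor ((t:ℝ) * L i) with hjdef
      have hki : ki i t = j := by simp only [hkidef]; exact min_eq_right (le_of_lt hcase)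
      have hflo : (j:ℝ) ≤ (t:ℝ) * L i := Nat.floor_le (by positivity)
      have hfhi : (t:ℝ) * L i < j + 1 := Nat.lt_floor_add_one _
      set A := j * M with hA
      set B := (j+1) * M with hB
      have hAB : (A:ℝ) = (j:ℝ) * M ∧ (B:ℝ) = ((j:ℝ)+1) * M := by
        constructor <;> [rw [hA]; rw [hB]] <;> push_cast <;> ring
      have hlow : A ≤ Nat.floor ((t:ℝ) * L (i+1)) := by
        apply Nat.le_floor
        rw [hLM, ← mul_assoc, hAB.1]
        nlinarith [hMpos]
      have hhigh : Nat.floor ((t:ℝ) * L (i+1)) < B := by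
        rw [Nat.floor_lt (by positivity), hLM, ← mul_assoc, hAB.2]
        nlinarith [hMpos]
      have hBL : B ≤ L (i+1) := by
        rw [hB, hLs]
        exact Nat.mul_le_mul_right M hcase
      have hk1low : A ≤ ki (i+1) t := by
        simp only [hkidef]
        omega
      have hk1high : ki (i+1) t ≤ B := by
        simp only [hkidef]
        omega
      have hcl := hclose j hcase (ki (i+1) t) (by rwa [← hA]) (by rwa [← hB])
      rw [hgidef]
      simp only [hki]
      exact le_of_lt hcl
  have hE2 : ∀ i (t t' : unitInterval), |(t:ℝ) - (t':ℝ)| * L i < 1 →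
      dist (gi i t) (gi i t') ≤ δ' i := by
    intro i t t' h
    have ht0 : (0:ℝ) ≤ (t:ℝ) := t.2.1
    have ht0' : (0:ℝ) ≤ (t':ℝ) := t'.2.1
    have k1 : (t:ℝ)*L i - (t':ℝ)*L i < 1 := by
      nlinarith [le_abs_self ((t:ℝ) - (t':ℝ)), hLpos i]
    have k2 : (t':ℝ)*L i - (t:ℝ)*L i < 1 := by
      nlinarith [neg_abs_le ((t:ℝ) - (t':ℝ)), hLpos i]
    have f1 : Nat.floor ((t:ℝ)*L i) ≤ Nat.floor ((t':ℝ)*L i) + 1 := by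
      have hb := Nat.lt_floor_add_one ((t':ℝ)*L i)
      have hlt : (t:ℝ)*L i < ((Nat.floor ((t':ℝ)*L i) + 2 : ℕ) : ℝ) := by push_cast; linarith
      have h2 := (Nat.floor_lt (by positivity)).mpr hlt
      omega
    have f2 : Nat.floor ((t':ℝ)*L i) ≤ Nat.floor ((t:ℝ)*L i) + 1 := by
      have hb := Nat.lt_floor_add_one ((t:ℝ)*L i)
      have hlt : (t':ℝ)*L i < ((Nat.floor ((t:ℝ)*L i) + 2 : ℕ) : ℝ) := by push_cast; linarith
      have h2 := (Nat.floor_lt (by positivity)).mpr hlt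
      omega
    have hcases : ki i t = ki i t' ∨ (ki i t' = ki i t + 1 ∧ ki i t < L i) ∨
        (ki i t = ki i t' + 1 ∧ ki i t' < L i) := by
      simp only [hkidef]
      omega
    rcases hcases with heq | ⟨heq, hlt⟩ | ⟨heq, hlt⟩
    · rw [hgidef]
      simp only [heq, dist_self]
      exact le_of_lt (hδ'pos i)
    · rw [hgidef]
      simp only [heq]
      exact le_of_lt (hgaps i _ hlt)
    · rw [hgidef]
      simp only [heq]
      rw [dist_comm]
      exact le_of_lt (hgaps i _ hlt)
  have hcau : ∀ i N (t : unitInterval),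
      dist (gi i t) (gi (i+N) t) ≤ ε/2^(i+2) - ε/2^(i+N+2) := by
    intro i N t
    induction N with
    | zero => simp
    | succ N ih =>
      have htri := dist_triangle (gi i t) (gi (i+N) t) (gi (i+N+1) t)
      have h1 : dist (gi (i+N) t) (gi (i+N+1) t) ≤ ε / 2^(i+N+3) := by
        rw [dist_comm]
        exact hE1 (i+N) t
      have hpow : (2:ℝ)^(i+N+3) = 2^(i+N+2) * 2 := pow_succ 2 (i+N+2)
      have hpos : (0:ℝ) < 2^(i+N+2) := by positivity
      have e1 : ε / 2^(i+N+3) + ε/2^(i+N+3) = ε/2^(i+N+2) := by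
        rw [hpow]
        field_simp
        ring
      have hfin : dist (gi i t) (gi (i+(N+1)) t) ≤ ε/2^(i+2) - ε/2^(i+N+3) := by
        have : i + (N+1) = i + N + 1 := by ring
        rw [this]
        linarith
      have : i+(N+1)+2 = i+N+3 := by ring
      rw [this]
      exact hfin
  have hbound : ∀ i i' (t : unitInterval), i ≤ i' → dist (gi i t) (gi i' t) ≤ ε/2^(i+2) := by
    intro i i' t h
    obtain ⟨N, rfl⟩ := Nat.exists_eq_add_of_le h
    refine le_trans (hcau i N t) ?_
    have : (0:ℝ) < ε/2^(i+N+2) := by positivity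
    linarith
  have hcauchy : ∀ t : unitInterval, CauchySeq (fun i => gi i t) := by
    intro t
    rw [Metric.cauchySeq_iff']
    intro η hη
    obtain ⟨N, hN⟩ := (hto0.eventually (gt_mem_nhds hη)).exists
    refine ⟨N, fun m hm => ?_⟩
    calc dist (gi m t) (gi N t) = dist (gi N t) (gi m t) := dist_comm _ _
      _ ≤ ε/2^(N+2) := hbound N m t hm
      _ < η := hN
  have hlim : ∀ t : unitInterval, ∃ z, Filter.Tendsto (fun i => gi i t) Filter.atTop (nhds z) :=
    fun t => cauchySeq_tendsto_of_complete (hcauchy t)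
  choose γf hγf using hlim
  have hdistlim : ∀ i t, dist (gi i t) (γf t) ≤ ε/2^(i+2) := by
    intro i t
    have hc : Filter.Tendsto (fun i' => dist (gi i t) (gi i' t)) Filter.atTop
        (nhds (dist (gi i t) (γf t))) := Filter.Tendsto.dist tendsto_const_nhds (hγf t)
    refine le_of_tendsto hc ?_
    filter_upwards [Filter.eventually_ge_atTop i] with i' hi'
    exact hbound i i' t hi'
  have hεsle : ∀ i, εs i ≤ ε/2^(i+2) := by
    intro i
    rw [hεsdef]
    have h1 : (2:ℝ)^(i+2) ≤ 2^(i+3) := by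
      apply pow_le_pow_right₀ one_le_two
      omega
    have h2 : (0:ℝ) < 2^(i+2) := by positivity
    exact div_le_div_of_nonneg_left (le_of_lt hε) h2 h1
  have hcont : Continuous γf := by
    rw [Metric.continuous_iff]
    intro t ρ hρ
    have hρ4 : (0:ℝ) < ρ/4 := by positivity
    obtain ⟨i, hi⟩ := (hto0.eventually (gt_mem_nhds hρ4)).exists
    refine ⟨(L i : ℝ)⁻¹, inv_pos.mpr (hLpos i), fun t' ht' => ?_⟩
    have hd : dist t' t = |(t':ℝ) - (t:ℝ)| := by rw [Subtype.dist_eq, Real.dist_eq]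
    rw [hd] at ht'
    have habs : |(t':ℝ) - (t:ℝ)| * L i < 1 := by
      calc |(t':ℝ) - (t:ℝ)| * L i < (L i : ℝ)⁻¹ * L i :=
            mul_lt_mul_of_pos_right ht' (hLpos i)
        _ = 1 := inv_mul_cancel₀ (ne_of_gt (hLpos i))
    have h2 := hE2 i t' t habs
    have h3 := hdistlim i t'
    have h4 := hdistlim i t
    have h5 : δ' i ≤ ε/2^(i+2) := le_trans (hδ'le i) (hεsle i)
    calc dist (γf t') (γf t)
        ≤ dist (γf t') (gi i t') + dist (gi i t') (gi i t) + dist (gi i t) (γf t) :=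
          dist_triangle4 _ _ _ _
      _ ≤ ε/2^(i+2) + δ' i + ε/2^(i+2) := by
          rw [dist_comm (γf t') (gi i t')]
          gcongr
      _ < ρ := by linarith
  have hgzero : ∀ i, gi i (0 : unitInterval) = x := by
    intro i
    have hk0 : ki i (0 : unitInterval) = 0 := by
      simp [hkidef]
    rw [hgidef]
    simp only [hk0]
    exact hP0 i
  have hgone : ∀ i, gi i (1 : unitInterval) = y := by
    intro i
    have hk1 : ki i (1 : unitInterval) = L i := by
      simp [hkidef]
    rw [hgidef]
    simp only [hk1]
    exact hPL i
  have hend0 : γf 0 = x := by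
    have h := hγf 0
    simp only [hgzero] at h
    exact tendsto_nhds_unique h tendsto_const_nhds
  have hend1 : γf 1 = y := by
    have h := hγf 1
    simp only [hgone] at h
    exact tendsto_nhds_unique h tendsto_const_nhds
  have himg : ∀ t, dist (γf t) x < ε := by
    intro t
    have h1 : dist (gi 0 t) x < δ' 0 := by
      rw [hgidef]
      exact h0 (ki 0 t)
    have h2 := hdistlim 0 t
    have h3 : δ' 0 ≤ ε/8 := by
      refine le_trans (hδ'le 0) (le_of_eq ?_)
      rw [hεsdef]
      norm_num
    have h4 : ε/2^(0+2) = ε/4 := by norm_num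
    calc dist (γf t) x ≤ dist (γf t) (gi 0 t) + dist (gi 0 t) x := dist_triangle _ _ _
      _ ≤ ε/4 + δ' 0 := by
          rw [dist_comm (γf t) (gi 0 t)]
          rw [h4] at h2
          exact add_le_add h2 (le_of_lt h1)
      _ < ε := by linarith
  exact ⟨⟨γf, hcont⟩, hend0, hend1, himg⟩
end Path

noncomputable section Drag
variable {n : ℕ}

private lemma sph_norm (s : Sph n) : ‖(s : EuclideanSpace ℝ (Fin (n+1)))‖ = 1 := by
  have := s.2
  rwa [mem_sphere_zero_iff_norm] at this

private def acoord (s : Sph n) : ℝ := (s : EuclideanSpace ℝ (Fin (n+1))) 0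

private lemma acoord_cont : Continuous (acoord (n := n)) :=
  (EuclideanSpace.proj (0 : Fin (n+1))).continuous.comp continuous_subtype_val

private lemma spherePt_val : (spherePt n : EuclideanSpace ℝ (Fin (n+1))) =
    EuclideanSpace.single 0 1 := rfl

private lemma acoord_spherePt : acoord (spherePt n) = 1 := by
  rw [acoord, spherePt_val]
  simp [EuclideanSpace.single_apply]

private def lamf (s : Sph n) : ℝ := min 1 (max 0 (1 - 2 * acoord s))
private def uuf (s : Sph n) : ℝ := min 1 (max 0 (2 * (1 - acoord s)))

private lemma lamf_mem (s : Sph n) : 0 ≤ lamf s ∧ lamf s ≤ 1 :=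
  ⟨le_min zero_le_one (le_max_left 0 _), min_le_left _ _⟩

private lemma uuf_mem (s : Sph n) : 0 ≤ uuf s ∧ uuf s ≤ 1 :=
  ⟨le_min zero_le_one (le_max_left 0 _), min_le_left _ _⟩

private lemma lamf_cont : Continuous (lamf (n := n)) :=
  continuous_const.min (continuous_const.max
    (continuous_const.sub (continuous_const.mul acoord_cont)))

private lemma uuf_cont : Continuous (uuf (n := n)) :=
  continuous_const.min (continuous_const.max
    (continuous_const.mul (continuous_const.sub acoord_cont)))

private lemma lamf_eq_zero {s : Sph n} (h : (1:ℝ)/2 ≤ acoord s) : lamf s = 0 := by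
  have h1 : 1 - 2 * acoord s ≤ 0 := by linarith
  simp [lamf, max_eq_left h1]

private lemma uuf_eq_one {s : Sph n} (h : acoord s = 1/2) : uuf s = 1 := by
  rw [uuf, h]
  norm_num

private lemma uuf_spherePt : uuf (spherePt n) = 0 := by
  simp [uuf, acoord_spherePt]

private def muf (s : Sph n) (t : ℝ) : ℝ := 1 - t * (1 - lamf s)

private def vvf (s : Sph n) (t : ℝ) : EuclideanSpace ℝ (Fin (n+1)) :=
  (1 - muf s t) • (EuclideanSpace.single 0 1 : EuclideanSpace ℝ (Fin (n+1))) +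
    muf s t • (s : EuclideanSpace ℝ (Fin (n+1)))

private lemma vvf_mu1 {s : Sph n} {t : ℝ} (h : muf s t = 1) :
    vvf s t = (s : EuclideanSpace ℝ (Fin (n+1))) := by
  simp [vvf, h]

private lemma vvf_mu0 {s : Sph n} {t : ℝ} (h : muf s t = 0) :
    vvf s t = (EuclideanSpace.single 0 1 : EuclideanSpace ℝ (Fin (n+1))) := by
  simp [vvf, h]

private lemma vvf_ne_zero (s : Sph n) (t : ℝ) (ht0 : 0 ≤ t) (ht1 : t ≤ 1) :
    vvf s t ≠ 0 := by
  obtain ⟨hl0, hl1⟩ := lamf_mem s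
  have hμ0 : 0 ≤ muf s t := by
    have : t * (1 - lamf s) ≤ 1 * 1 :=
      mul_le_mul ht1 (by linarith) (by linarith) zero_le_one
    simp only [muf]; linarith
  intro h
  have heq : (1 - muf s t) • (EuclideanSpace.single 0 1 : EuclideanSpace ℝ (Fin (n+1)))
      = -(muf s t • (s : EuclideanSpace ℝ (Fin (n+1)))) := by
    rw [eq_neg_iff_add_eq_zero]
    exact h
  have hnorm := congrArg norm heq
  rw [norm_neg, norm_smul, norm_smul, EuclideanSpace.norm_single, sph_norm] at hnorm
  simp only [norm_one, mul_one] at hnorm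
  rw [Real.norm_eq_abs, Real.norm_eq_abs] at hnorm
  have hμ1 : muf s t ≤ 1 := by
    have : 0 ≤ t * (1 - lamf s) := mul_nonneg ht0 (by linarith)
    simp only [muf]; linarith
  rw [abs_of_nonneg (by linarith), abs_of_nonneg hμ0] at hnorm
  have hhalf : muf s t = 1/2 := by linarith
  have hs : (s : EuclideanSpace ℝ (Fin (n+1))) =
      -(EuclideanSpace.single 0 1 : EuclideanSpace ℝ (Fin (n+1))) := by
    have h2 := congrArg (fun v => (2:ℝ) • v) h
    simp only [vvf, hhalf, smul_add, smul_smul, smul_zero] at h2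
    norm_num at h2
    rw [add_eq_zero_iff_eq_neg] at h2
    have h3 := congrArg (fun v : EuclideanSpace ℝ (Fin (n+1)) => -v) h2
    simpa using h3.symm
  have ha : acoord s = -1 := by
    rw [acoord]
    rw [show (s : EuclideanSpace ℝ (Fin (n+1))) 0 =
      (-(EuclideanSpace.single 0 1 : EuclideanSpace ℝ (Fin (n+1)))) 0 from by rw [hs]]
    simp [EuclideanSpace.single_apply]
  have hlam : lamf s = 1 := by
    rw [lamf, ha]
    norm_num
  rw [muf, hlam] at hhalf
  norm_num at hhalf

private lemma vvf_cont : Continuous (fun p : Sph n × unitInterval => vvf p.1 (p.2 : ℝ)) := by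
  have hmu : Continuous (fun p : Sph n × unitInterval => muf p.1 (p.2 : ℝ)) :=
    continuous_const.sub ((continuous_subtype_val.comp continuous_snd).mul
      (continuous_const.sub (lamf_cont.comp continuous_fst)))
  exact ((continuous_const.sub hmu).smul continuous_const).add
    (hmu.smul (continuous_subtype_val.comp continuous_fst))

private noncomputable def HSmap (p : Sph n × unitInterval) : Sph n :=
  ⟨‖vvf p.1 (p.2 : ℝ)‖⁻¹ • vvf p.1 (p.2 : ℝ), by
    rw [mem_sphere_zero_iff_norm, norm_smul, norm_inv, norm_norm]
    exact inv_mul_cancel₀ (norm_ne_zero_iff.mpr (vvf_ne_zero p.1 p.2 p.2.2.1 p.2.2.2))⟩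

private lemma HSmap_val (p : Sph n × unitInterval) :
    (HSmap p : EuclideanSpace ℝ (Fin (n+1))) = ‖vvf p.1 (p.2 : ℝ)‖⁻¹ • vvf p.1 (p.2 : ℝ) := rfl

private lemma HSmap_cont : Continuous (HSmap (n := n)) := by
  apply Continuous.subtype_mk
  exact (vvf_cont.norm.inv₀
    (fun p => norm_ne_zero_iff.mpr (vvf_ne_zero p.1 p.2 p.2.2.1 p.2.2.2))).smul vvf_cont

private lemma HSmap_zero (s : Sph n) : HSmap (s, (0 : unitInterval)) = s := by
  apply Subtype.ext
  rw [HSmap_val]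
  have hμ : muf s (((0 : unitInterval)) : ℝ) = 1 := by
    show muf s 0 = 1
    simp [muf]
  rw [vvf_mu1 hμ, sph_norm]
  norm_num

private noncomputable def sigmaf (s : Sph n) : Sph n := HSmap (s, 1)

private lemma sigmaf_base {s : Sph n} (h : (1:ℝ)/2 ≤ acoord s) : sigmaf s = spherePt n := by
  apply Subtype.ext
  rw [sigmaf, HSmap_val, spherePt_val]
  have hμ : muf s (((1 : unitInterval)) : ℝ) = 0 := by
    show muf s 1 = 0
    simp [muf, lamf_eq_zero h]
  rw [vvf_mu0 hμ, EuclideanSpace.norm_single]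
  norm_num

private noncomputable def sigmac : C(Sph n, Sph n) :=
  ⟨sigmaf, HSmap_cont.comp (continuous_id.prodMk continuous_const)⟩

private lemma homotopic_sigma {X : Type*} [TopologicalSpace X] (f : C(Sph n, X)) :
    f.Homotopic (f.comp sigmac) := by
  refine ⟨⟨⟨fun p => f (HSmap (p.2, p.1)), ?_⟩, ?_, ?_⟩⟩
  · exact f.continuous.comp (HSmap_cont.comp (continuous_snd.prodMk continuous_fst))
  · intro s
    show f (HSmap (s, 0)) = f s
    rw [HSmap_zero]
  · intro s
    rfl

lemma drag {X : Type*} [TopologicalSpace X] (f : C(Sph n, X)) (β : C(unitInterval, X))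
    (hβ : β 0 = f (spherePt n)) :
    ∃ g : C(Sph n, X), g (spherePt n) = β 1 ∧ f.Homotopic g ∧
      ∀ s, (∃ r, g s = β r) ∨ ∃ s', g s = f s' := by
  classical
  have humem : ∀ s : Sph n, 1 - uuf s ∈ unitInterval :=
    fun s => ⟨by linarith [(uuf_mem s).2], by linarith [(uuf_mem s).1]⟩
  have htumem : ∀ (t : unitInterval) (s : Sph n), (t : ℝ) * (1 - uuf s) ∈ unitInterval := by
    intro t s
    constructor
    · exact mul_nonneg t.2.1 (humem s).1
    · exact mul_le_one₀ t.2.2 (humem s).1 (by linarith [(uuf_mem s).1])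
  set g : Sph n → X :=
    fun s => if (1:ℝ)/2 ≤ acoord s then β ⟨1 - uuf s, humem s⟩ else f (sigmaf s) with hgdef
  have hbdry : ∀ s : Sph n, acoord s = 1/2 →
      β ⟨1 - uuf s, humem s⟩ = f (sigmaf s) := by
    intro s h
    have h1 : (⟨1 - uuf s, humem s⟩ : unitInterval) = 0 := by
      apply Subtype.ext
      show 1 - uuf s = 0
      rw [uuf_eq_one h]
      ring
    rw [h1, hβ, sigmaf_base (le_of_eq h.symm)]
  have hgcont : Continuous g := by
    simp only [hgdef]
    apply Continuous.if_le
    · exact β.continuous.comp (Continuous.subtype_mk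
        (continuous_const.sub uuf_cont) _)
    · exact f.continuous.comp (HSmap_cont.comp (continuous_id.prodMk continuous_const))
    · exact continuous_const
    · exact acoord_cont
    · exact fun s h => hbdry s h.symm
  -- homotopy from f ∘ σ to g
  have hhom2 : (f.comp sigmac).Homotopic ⟨g, hgcont⟩ := by
    refine ⟨⟨⟨fun p => if (1:ℝ)/2 ≤ acoord p.2 then β ⟨(p.1 : ℝ) * (1 - uuf p.2), htumem p.1 p.2⟩
        else f (sigmaf p.2), ?_⟩, ?_, ?_⟩⟩
    · apply Continuous.if_le
      · refine β.continuous.comp (Continuous.subtype_mk ?_ _)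
        exact (continuous_subtype_val.comp continuous_fst).mul
          (continuous_const.sub (uuf_cont.comp continuous_snd))
      · exact f.continuous.comp ((HSmap_cont.comp
          (continuous_id.prodMk continuous_const)).comp continuous_snd)
      · exact continuous_const
      · exact acoord_cont.comp continuous_snd
      · intro p h
        have h1 : (⟨((p.1 : unitInterval) : ℝ) * (1 - uuf p.2), htumem p.1 p.2⟩ : unitInterval)
            = 0 := by
          apply Subtype.ext
          show (p.1 : ℝ) * (1 - uuf p.2) = 0
          rw [uuf_eq_one h.symm]
          ring
        rw [h1, hβ, sigmaf_base (le_of_eq h)]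
    · intro s
      show (if (1:ℝ)/2 ≤ acoord s then β ⟨((0:unitInterval) : ℝ) * (1 - uuf s), _⟩
          else f (sigmaf s)) = (f.comp sigmac) s
      by_cases h : (1:ℝ)/2 ≤ acoord s
      · rw [if_pos h]
        have h1 : (⟨((0:unitInterval) : ℝ) * (1 - uuf s), htumem 0 s⟩ : unitInterval) = 0 := by
          apply Subtype.ext
          show ((0:unitInterval) : ℝ) * (1 - uuf s) = 0
          norm_num
        rw [h1, hβ]
        show f (spherePt n) = f (sigmac s)
        rw [show sigmac s = sigmaf s from rfl, sigmaf_base h]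
      · rw [if_neg h]
        rfl
    · intro s
      show (if (1:ℝ)/2 ≤ acoord s then β ⟨((1:unitInterval) : ℝ) * (1 - uuf s), _⟩
          else f (sigmaf s)) = g s
      simp only [hgdef]
      by_cases h : (1:ℝ)/2 ≤ acoord s
      · rw [if_pos h, if_pos h]
        congr 1
        apply Subtype.ext
        show ((1:unitInterval) : ℝ) * (1 - uuf s) = 1 - uuf s
        norm_num
      · rw [if_neg h, if_neg h]
  refine ⟨⟨g, hgcont⟩, ?_, (homotopic_sigma f).trans hhom2, ?_⟩
  · show g (spherePt n) = β 1
    simp only [hgdef]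
    have hpos : (1:ℝ)/2 ≤ acoord (spherePt n) := by rw [acoord_spherePt]; norm_num
    rw [if_pos hpos]
    congr 1
    apply Subtype.ext
    show 1 - uuf (spherePt n) = ((1 : unitInterval) : ℝ)
    rw [uuf_spherePt]
    norm_num
  · intro s
    show (∃ r, g s = β r) ∨ ∃ s', g s = f s'
    simp only [hgdef]
    by_cases h : (1:ℝ)/2 ≤ acoord s
    · exact Or.inl ⟨⟨1 - uuf s, humem s⟩, by rw [if_pos h]⟩
    · exact Or.inr ⟨sigmaf s, by rw [if_neg h]⟩
end Drag

/-- the `π_n`-wild set of a Peano continuum is closed, hence a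
compact metrizable space. -/
theorem stmt6 {X : Type*} [TopologicalSpace X] [CompactSpace X] [ConnectedSpace X]
    [LocallyConnectedSpace X] [TopologicalSpace.MetrizableSpace X] [Nonempty X] (n : ℕ) :
    IsClosed (wildSet n X) ∧ IsCompact (wildSet n X) ∧
    TopologicalSpace.MetrizableSpace ↥(wildSet n X) := by
  have hclosed : IsClosed (wildSet n X) := by
    letI : MetricSpace X := TopologicalSpace.metrizableSpaceMetric X
    apply IsSeqClosed.isClosed
    intro u x hu hux
    have key : ∀ ε : ℝ, 0 < ε → ∃ g : C(Sph n, X), g (spherePt n) = x ∧ Essential g ∧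
        ∀ s, dist (g s) x < ε := by
      intro ε hε
      obtain ⟨δ, hδ, hpath⟩ := exists_small_path (X := X) (half_pos hε)
      have hδ' : 0 < min δ (ε/2) := lt_min hδ (half_pos hε)
      obtain ⟨N, hN⟩ := Metric.tendsto_atTop.mp hux _ hδ'
      have hj : dist (u N) x < min δ (ε/2) := hN N le_rfl
      obtain ⟨fseq, hbase, hess, htend⟩ := hu N
      rw [ContinuousMap.tendsto_iff_tendstoUniformly, Metric.tendstoUniformly_iff] at htend
      obtain ⟨k, hk⟩ := (htend (ε/2) (half_pos hε)).exists
      have hdxu : dist x (u N) < δ := by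
        rw [dist_comm]
        exact lt_of_lt_of_le hj (min_le_left _ _)
      obtain ⟨γ, hγ0, hγ1, hγball⟩ := hpath x (u N) hdxu
      set β : C(unitInterval, X) :=
        γ.comp ⟨unitInterval.symm, unitInterval.continuous_symm⟩ with hβdef
      have hβ0 : β 0 = fseq k (spherePt n) := by
        rw [hbase k]
        show γ (unitInterval.symm 0) = u N
        rw [unitInterval.symm_zero]
        exact hγ1
      obtain ⟨g, hg0, hhom, hval⟩ := drag (fseq k) β hβ0
      refine ⟨g, ?_, ?_, ?_⟩
      · rw [hg0]
        show γ (unitInterval.symm 1) = x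
        rw [unitInterval.symm_one]
        exact hγ0
      · intro z hz
        exact hess k z (hhom.trans hz)
      · intro s
        rcases hval s with ⟨r, hr⟩ | ⟨s', hs'⟩
        · rw [hr]
          show dist (γ (unitInterval.symm r)) x < ε
          have h1 := hγball (unitInterval.symm r)
          linarith
        · rw [hs']
          have h1 := hk s'
          have h2 : dist (u N) x < ε/2 := lt_of_lt_of_le hj (min_le_right _ _)
          calc dist (fseq k s') x ≤ dist (fseq k s') (u N) + dist (u N) x :=
                dist_triangle _ _ _
            _ < ε/2 + ε/2 := by
                rw [dist_comm (fseq k s') (u N)]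
                exact add_lt_add h1 h2
            _ = ε := by ring
    have hseq : ∀ m : ℕ, ∃ g : C(Sph n, X), g (spherePt n) = x ∧ Essential g ∧
        ∀ s, dist (g s) x < 1/(m+1) := fun m => key _ (by positivity)
    choose G hG1 hG2 hG3 using hseq
    refine ⟨G, hG1, hG2, ?_⟩
    rw [ContinuousMap.tendsto_iff_tendstoUniformly, Metric.tendstoUniformly_iff]
    intro η hη
    obtain ⟨m0, hm0⟩ := exists_nat_gt (1/η)
    rw [Filter.eventually_atTop]
    refine ⟨m0, fun m hm s => ?_⟩
    have h1 := hG3 m s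
    have h2 : (1:ℝ)/(m+1) ≤ 1/(m0+1) := by
      apply one_div_le_one_div_of_le (by positivity)
      have : (m0:ℝ) ≤ m := by exact_mod_cast hm
      linarith
    have h3 : (1:ℝ)/(m0+1) < η := by
      rw [div_lt_iff₀ (by positivity)]
      have h4 := (div_lt_iff₀ hη).mp hm0
      nlinarith
    show dist x (G m s) < η
    rw [dist_comm]
    linarith
  exact ⟨hclosed, hclosed.isCompact, inferInstance⟩
end

section
/- Let n ∈ ℕ and let X, Y be Hausdorff topological spaces that are completely π_n-rigid (i.e. rg_n(X) = w_n(X) and rg_n(Y) = w_n(Y)). If there exist continuous maps f : X → Y and g : Y → X with g ∘ f homotopic to the identity of X and f ∘ g homotopic to the identity of Y, then f restricts to a homeomorphism from w_n(X) onto w_n(Y) (with their subspace topologies), whose inverse is the restriction of g. -/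
open Filter Topology

section Aux
variable {n : ℕ} {X Y : Type*} [TopologicalSpace X] [TopologicalSpace Y]

lemma essential_comp2 (f : C(X, Y)) (g : C(Y, X))
    (hgf : (g.comp f).Homotopic (ContinuousMap.id X))
    {φ : C(Sph n, X)} (h : Essential φ) : Essential (f.comp φ) := by
  intro y hy
  apply h (g y)
  have h1 : ((g.comp f).comp φ).Homotopic ((ContinuousMap.id X).comp φ) :=
    ContinuousMap.Homotopic.comp hgf (ContinuousMap.Homotopic.refl φ)
  have h2 : (g.comp (f.comp φ)).Homotopic (g.comp (ContinuousMap.const (Sph n) y)) :=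
    ContinuousMap.Homotopic.comp (ContinuousMap.Homotopic.refl g) hy
  rw [ContinuousMap.id_comp] at h1
  rw [← ContinuousMap.comp_assoc, ContinuousMap.comp_const] at h2
  exact h1.symm.trans h2

lemma wild_map (f : C(X, Y)) (g : C(Y, X))
    (hgf : (g.comp f).Homotopic (ContinuousMap.id X))
    {x : X} (hx : IsWildPoint n x) : IsWildPoint n (f x) := by
  obtain ⟨φ, hb, he, ht⟩ := hx
  refine ⟨fun k => f.comp (φ k), fun k => by simp [hb k], fun k => essential_comp2 f g hgf (he k), ?_⟩
  have h1 : Tendsto (fun k => f.comp (φ k)) atTop (𝓝 (f.comp (ContinuousMap.const (Sph n) x))) :=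
    ((ContinuousMap.continuous_postcomp f).tendsto _).comp ht
  rwa [ContinuousMap.comp_const] at h1

lemma gf_fix (f : C(X, Y)) (g : C(Y, X))
    (hgf : (g.comp f).Homotopic (ContinuousMap.id X))
    {x : X} (hx : IsRigidAt n x) : g (f x) = x := by
  obtain ⟨φ, hb, he, ht, hr⟩ := hx
  obtain ⟨K⟩ := hgf.symm
  set L : C(X × unitInterval, X) :=
    ⟨fun p => K (p.2, p.1), K.continuous.comp (continuous_snd.prodMk continuous_fst)⟩ with hL
  set β : C(unitInterval, X) := L.curry x with hβ
  have hβ0 : β 0 = x := by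
    simp [hβ, hL, ContinuousMap.curry_apply, K.apply_zero]
  set Φ : C(Sph n, X) → C(Sph n × unitInterval, X) :=
    fun F => (L.curry.comp F).uncurry with hΦdef
  have hΦ : Continuous Φ :=
    ContinuousMap.continuous_uncurry.comp (ContinuousMap.continuous_postcomp _)
  have key := hr β hβ0 (fun k => Φ (φ k))
    (fun k s => by simp [hΦdef, hL, K.apply_zero])
    (fun k t => by simp [hΦdef, hβ, hb k])
    (by
      have h1 : Tendsto (fun k => Φ (φ k)) atTop (𝓝 (Φ (ContinuousMap.const (Sph n) x))) :=
        (hΦ.tendsto _).comp ht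
      have h2 : Φ (ContinuousMap.const (Sph n) x)
          = β.comp (ContinuousMap.snd (α := Sph n)) := by
        ext ⟨s, t⟩; rfl
      rwa [h2] at h1)
  have h1 : β 1 = g (f x) := by
    simp [hβ, hL, ContinuousMap.curry_apply, K.apply_one]
  rw [h1] at key
  exact key

end Aux

/-- homotopy equivalent completely `π_n`-rigid spaces have
homeomorphic wild sets, via the restrictions of the homotopy inverses. -/
theorem stmt15 {X Y : Type*} [TopologicalSpace X] [TopologicalSpace Y]
    [T2Space X] [T2Space Y] (n : ℕ)
    (hX : {x : X | IsRigidAt n x} = wildSet n X)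
    (hY : {y : Y | IsRigidAt n y} = wildSet n Y)
    (f : C(X, Y)) (g : C(Y, X))
    (hgf : (g.comp f).Homotopic (ContinuousMap.id X))
    (hfg : (f.comp g).Homotopic (ContinuousMap.id Y)) :
    ∃ e : ↥(wildSet n X) ≃ₜ ↥(wildSet n Y),
      (∀ x : wildSet n X, (e x : Y) = f (x : X)) ∧
      (∀ y : wildSet n Y, (e.symm y : X) = g (y : Y)) := by
  have hfw : ∀ x : X, IsWildPoint n x → IsWildPoint n (f x) := fun x hx => wild_map f g hgf hx
  have hgw : ∀ y : Y, IsWildPoint n y → IsWildPoint n (g y) := fun y hy => wild_map g f hfg hy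
  have hgfx : ∀ x : X, x ∈ wildSet n X → g (f x) = x := fun x hx =>
    gf_fix f g hgf (show x ∈ {x : X | IsRigidAt n x} from hX ▸ hx)
  have hfgy : ∀ y : Y, y ∈ wildSet n Y → f (g y) = y := fun y hy =>
    gf_fix g f hfg (show y ∈ {y : Y | IsRigidAt n y} from hY ▸ hy)
  refine ⟨⟨⟨fun x => ⟨f x, hfw x x.2⟩, fun y => ⟨g y, hgw y y.2⟩,
    fun x => Subtype.ext (hgfx x x.2), fun y => Subtype.ext (hfgy y y.2)⟩,
    (f.continuous.comp continuous_subtype_val).subtype_mk _,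
    (g.continuous.comp continuous_subtype_val).subtype_mk _⟩,
    fun x => rfl, fun y => rfl⟩
end
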